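/- Let G be a finite group and H ≤ G a subgroup. Then D_H ≤ Σ_{h ∈ H, h ≠ e} |h^G|^{-1/2}, where h^G denotes the conjugacy class of h in G. -/

import Mathlib

open CategoryTheory Finset
open scoped Classical

/-- `D_H`: the total variation distance between the weak quantum Fourier sampling
distributions for the hidden subgroup `H` and for the trivial subgroup, namely
`(1/|G|) · Σ_ρ d_ρ · |Σ_{h ∈ H, h ≠ e} χ_ρ(h)|`, where `ρ` runs over the family
of irreducible representations. -/
noncomputable def weakDist {G : Type} [Group G] [Fintype G] {ι : Type} [Fintype ι]
    (ρ : ι → FDRep ℂ G) (H : Subgroup G) : ℝ :=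
  (Fintype.card G : ℝ)⁻¹ *
    ∑ i : ι, (Module.finrank ℂ (ρ i) : ℝ) *
      ‖∑ h ∈ Finset.univ.filter (fun h : G => h ∈ H ∧ h ≠ 1), (ρ i).character h‖

/-- `ρ : ι → FDRep ℂ G` is a complete family of pairwise non-isomorphic irreducible
complex representations of `G` (one per isomorphism class). -/
def IsCompleteIrrepFamily {G : Type} [Group G] {ι : Type} (ρ : ι → FDRep ℂ G) : Prop :=
  (∀ i, Simple (ρ i)) ∧
  (∀ i j, Nonempty (ρ i ≅ ρ j) → i = j) ∧
  (∀ V : FDRep ℂ G, Simple V → ∃ i, Nonempty (ρ i ≅ V))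


open Matrix
open scoped ComplexOrder
open scoped MatrixOrder



lemma trace_apply_inv_eq_conj {G : Type*} [Group G] [Fintype G] {n : Type*} [Fintype n]
    [DecidableEq n] (M : G →* Matrix n n ℂ) (g : G) :
    (M g⁻¹).trace = starRingEnd ℂ (M g).trace := by
  classical
  set P : Matrix n n ℂ := ∑ t : G, (M t)ᴴ * M t with hPdef
  have hPsum : ∀ h : G, (M h)ᴴ * P * M h = P := by
    intro h
    rw [hPdef, Finset.mul_sum, Finset.sum_mul]
    rw [← Equiv.sum_comp (Equiv.mulRight h) (fun t => (M t)ᴴ * M t)]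
    refine Finset.sum_congr rfl fun t _ => ?_
    simp [Equiv.mulRight, _root_.map_mul, conjTranspose_mul, Matrix.mul_assoc]
  have hP : P.PosDef := by
    have h1 : (M 1)ᴴ * M 1 = (1 : Matrix n n ℂ) := by simp
    have hsplit : P = (M 1)ᴴ * M 1 + ∑ t ∈ Finset.univ.erase (1 : G), (M t)ᴴ * M t :=
      (Finset.add_sum_erase Finset.univ _ (Finset.mem_univ (1 : G))).symm
    rw [hsplit, h1]
    refine Matrix.PosDef.add_posSemidef Matrix.PosDef.one ?_
    refine Finset.sum_induction _ _ (fun a b ha hb => ha.add hb) Matrix.PosSemidef.zero ?_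
    exact fun t _ => Matrix.posSemidef_conjTranspose_mul_self _
  set Q := CFC.sqrt P with hQdef
  have hQQ : Q * Q = P := CFC.sqrt_mul_sqrt_self P hP.posSemidef.nonneg
  have hQH : Qᴴ = Q := (CFC.sqrt_nonneg P).posSemidef.isHermitian
  have hdQ : IsUnit Q.det := by
    have h2 : IsUnit (Q.det * Q.det) := by
      rw [← det_mul, hQQ]; exact hP.isUnit.map detMonoidHom
    exact isUnit_of_mul_isUnit_left h2
  have hQiQ : Q⁻¹ * Q = 1 := nonsing_inv_mul Q hdQ
  have hQQi : Q * Q⁻¹ = 1 := mul_nonsing_inv Q hdQ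
  set N : G → Matrix n n ℂ := fun h => Q * M h * Q⁻¹ with hNdef
  have hNU : ∀ h : G, (N h)ᴴ * N h = 1 := by
    intro h
    have hc : (N h)ᴴ = Q⁻¹ * (M h)ᴴ * Q := by
      rw [hNdef]
      simp only [conjTranspose_mul, conjTranspose_nonsing_inv, hQH, Matrix.mul_assoc]
    rw [hc, hNdef]
    calc Q⁻¹ * (M h)ᴴ * Q * (Q * M h * Q⁻¹)
        = Q⁻¹ * ((M h)ᴴ * (Q * Q) * M h) * Q⁻¹ := by
          simp only [Matrix.mul_assoc]
      _ = Q⁻¹ * P * Q⁻¹ := by rw [hQQ, hPsum]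
      _ = 1 := by
          rw [← hQQ]
          simp only [Matrix.mul_assoc, hQQi, Matrix.mul_one, hQiQ]
  have hNinv : N g⁻¹ * N g = 1 := by
    rw [hNdef]
    calc Q * M g⁻¹ * Q⁻¹ * (Q * M g * Q⁻¹)
        = Q * (M g⁻¹ * (Q⁻¹ * Q) * M g) * Q⁻¹ := by simp only [Matrix.mul_assoc]
      _ = Q * (M g⁻¹ * M g) * Q⁻¹ := by rw [hQiQ, Matrix.mul_one]
      _ = 1 := by rw [← _root_.map_mul, inv_mul_cancel, _root_.map_one, Matrix.mul_one, hQQi]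
  have hNg : N g⁻¹ = (N g)ᴴ := (inv_eq_left_inv hNinv).symm.trans (inv_eq_left_inv (hNU g))
  have htr : ∀ h : G, (N h).trace = (M h).trace := by
    intro h
    rw [hNdef]
    rw [Matrix.trace_mul_comm, ← Matrix.mul_assoc, hQiQ, Matrix.one_mul]
  calc (M g⁻¹).trace = (N g⁻¹).trace := (htr g⁻¹).symm
    _ = ((N g)ᴴ).trace := by rw [hNg]
    _ = star ((N g).trace) := trace_conjTranspose _
    _ = starRingEnd ℂ ((M g).trace) := by rw [htr g]; rfl

lemma FDRep.character_inv {G : Type} [Group G] [Fintype G] (V : FDRep ℂ G) (g : G) :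
    V.character g⁻¹ = starRingEnd ℂ (V.character g) := by
  classical
  let b := Module.finBasis ℂ V
  let e : (V →ₗ[ℂ] V) ≃ₐ[ℂ] Matrix (Fin (Module.finrank ℂ V)) (Fin (Module.finrank ℂ V)) ℂ :=
    LinearMap.toMatrixAlgEquiv b
  let M : G →* Matrix (Fin (Module.finrank ℂ V)) (Fin (Module.finrank ℂ V)) ℂ :=
    e.toAlgHom.toRingHom.toMonoidHom.comp (V.ρ)
  have htr : ∀ h : G, V.character h = (M h).trace := by
    intro h
    simp only [FDRep.character]
    rw [LinearMap.trace_eq_matrix_trace ℂ b]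
    rfl
  rw [htr, htr, trace_apply_inv_eq_conj M g]

lemma sum_abs_char_sq_le {G : Type} [Group G] [Fintype G] {ι : Type} [Fintype ι]
    (ρ : ι → FDRep ℂ G) (h1 : ∀ i, Simple (ρ i)) (h2 : ∀ i j, Nonempty (ρ i ≅ ρ j) → i = j)
    (h : G) :
    ∑ i : ι, ‖(ρ i).character h‖ ^ 2 ≤
      (Fintype.card G : ℝ) / (Finset.univ.filter (fun g : G => IsConj h g)).card := by
  haveI : ∀ i, Simple (ρ i) := h1
  set c : ℝ := (Fintype.card G : ℝ) with hcdef
  have hc : 0 < c := by positivity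
  have hcC : (Fintype.card G : ℂ) ≠ 0 := by
    exact_mod_cast Nat.cast_ne_zero.mpr Fintype.card_ne_zero
  haveI : Invertible (Fintype.card G : ℂ) := invertibleOfNonzero hcC
  set s : ℝ := (Real.sqrt c)⁻¹ with hsdef
  have hs2 : s * s = c⁻¹ := by
    rw [hsdef, ← mul_inv, Real.mul_self_sqrt hc.le]
  set v : ι → EuclideanSpace ℂ G := fun i => WithLp.toLp 2 (fun g => (s : ℂ) * (ρ i).character g) with hvdef
  -- orthonormality
  have hortho : Orthonormal ℂ v := by
    rw [orthonormal_iff_ite]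
    intro i j
    have hinner : (inner ℂ (v i) (v j) : ℂ) = ∑ g : G, (s : ℂ) * (s : ℂ) *
        ((ρ i).character g⁻¹ * (ρ j).character g) := by
      rw [PiLp.inner_apply]
      refine Finset.sum_congr rfl fun g _ => ?_
      simp only [hvdef, PiLp.toLp_apply, RCLike.inner_apply, _root_.map_mul, Complex.conj_ofReal]
      rw [← FDRep.character_inv]
      ring
    have hre : ∑ g : G, (ρ i).character g⁻¹ * (ρ j).character g
        = ∑ g : G, (ρ j).character g * (ρ i).character g⁻¹ := by
      refine Finset.sum_congr rfl fun g _ => mul_comm _ _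
    haveI := h1 i; haveI := h1 j
    have horth := FDRep.char_orthonormal (ρ j) (ρ i)
    have horth' : (Fintype.card G : ℂ)⁻¹ * ∑ g : G, (ρ j).character g * (ρ i).character g⁻¹
        = if Nonempty (ρ j ≅ ρ i) then 1 else 0 := by
        rw [Nat.card_eq_fintype_card] at horth; exact_mod_cast horth
    have hsum : ∑ g : G, (ρ j).character g * (ρ i).character g⁻¹
        = (Fintype.card G : ℂ) * (if Nonempty (ρ j ≅ ρ i) then 1 else 0) := by
      rw [← horth', mul_inv_cancel_left₀ hcC]
    rw [hinner, ← Finset.mul_sum, hre, hsum]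
    have hite : (if Nonempty (ρ j ≅ ρ i) then (1:ℂ) else 0) = if i = j then 1 else 0 := by
      by_cases hij : i = j
      · subst hij; rw [if_pos ⟨Iso.refl _⟩, if_pos rfl]
      · rw [if_neg (fun hn => hij ((h2 j i hn).symm)), if_neg hij]
    rw [hite]
    have : ((s:ℂ) * (s:ℂ)) * (Fintype.card G : ℂ) = 1 := by
      have : ((s:ℂ) * (s:ℂ)) = ((c⁻¹ : ℝ) : ℂ) := by
        rw [← Complex.ofReal_mul, hs2]
      rw [this, hcdef]
      push_cast
      field_simp
    rw [← mul_assoc, this, one_mul]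
  -- the class indicator vector
  set T : Finset G := Finset.univ.filter (fun g : G => IsConj h g) with hTdef
  have hhT : h ∈ T := by
    rw [hTdef, Finset.mem_filter]
    exact ⟨Finset.mem_univ h, IsConj.refl h⟩
  have hTpos : (0:ℝ) < T.card := by exact_mod_cast Finset.card_pos.mpr ⟨h, hhT⟩
  set x : EuclideanSpace ℂ G := WithLp.toLp 2 (fun g => if IsConj h g then (1:ℂ) else 0) with hxdef
  have hxnorm : ‖x‖ ^ 2 = T.card := by
    rw [← @inner_self_eq_norm_sq ℂ]
    have : (inner ℂ (x) (x) : ℂ) = (T.card : ℂ) := by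
      rw [PiLp.inner_apply]
      have hcomp : ∀ g : G, (inner ℂ (x g) (x g) : ℂ) = if IsConj h g then 1 else 0 := by
        intro g
        have hx : x g = if IsConj h g then 1 else 0 := rfl
        rw [RCLike.inner_apply, hx]
        by_cases hg : IsConj h g
        · rw [if_pos hg]; simp
        · rw [if_neg hg]; simp
      rw [Finset.sum_congr rfl (fun g _ => hcomp g), ← Finset.sum_filter, ← hTdef,
        Finset.sum_const, nsmul_eq_mul, mul_one]
    rw [this]
    simp
  have hinner_x : ∀ i, (inner ℂ (v i) (x) : ℂ) =
      (s : ℂ) * T.card * starRingEnd ℂ ((ρ i).character h) := by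
    intro i
    rw [PiLp.inner_apply]
    have hterm : ∀ g : G, (inner ℂ (v i g) (x g) : ℂ) =
        if IsConj h g then (s:ℂ) * starRingEnd ℂ ((ρ i).character h) else 0 := by
      intro g
      have hx : x g = if IsConj h g then 1 else 0 := rfl
      have hv : v i g = (s:ℂ) * (ρ i).character g := rfl
      rw [RCLike.inner_apply, hx, hv]
      by_cases hg : IsConj h g
      · obtain ⟨u, hu⟩ := isConj_iff.mp hg
        have hchar : (ρ i).character g = (ρ i).character h := by
          rw [← hu, FDRep.char_conj]
        rw [if_pos hg, if_pos hg, one_mul, _root_.map_mul, Complex.conj_ofReal, hchar]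
      · rw [if_neg hg, if_neg hg, zero_mul]
    rw [Finset.sum_congr rfl (fun g _ => hterm g), ← Finset.sum_filter, ← hTdef,
      Finset.sum_const, nsmul_eq_mul]
    ring
  have hbessel := hortho.sum_inner_products_le (s := Finset.univ) x
  rw [hxnorm] at hbessel
  have hterm : ∀ i, ‖(inner ℂ (v i) (x) : ℂ)‖ ^ 2 =
      c⁻¹ * (T.card:ℝ)^2 * ‖(ρ i).character h‖ ^ 2 := by
    intro i
    rw [hinner_x i]
    have : ‖(s : ℂ) * (T.card:ℂ) * starRingEnd ℂ ((ρ i).character h)‖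
        = s * T.card * ‖(ρ i).character h‖ := by
      rw [norm_mul, norm_mul, RCLike.norm_conj]
      have hs0 : 0 ≤ s := by positivity
      simp [abs_of_nonneg hs0]
    rw [this]
    rw [mul_pow, mul_pow, ← hs2]
    ring
  rw [Finset.sum_congr rfl (fun i _ => hterm i), ← Finset.mul_sum] at hbessel
  set S : ℝ := ∑ i : ι, ‖(ρ i).character h‖ ^ 2 with hSdef
  have hS0 : 0 ≤ S := Finset.sum_nonneg fun i _ => by positivity
  rw [le_div_iff₀ hTpos]
  have h5 : ((T.card:ℝ))^2 * S ≤ c * T.card := by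
    have hmul := mul_le_mul_of_nonneg_left hbessel hc.le
    calc ((T.card:ℝ))^2 * S = c * (c⁻¹ * (T.card:ℝ)^2 * S) := by
          field_simp
      _ ≤ c * T.card := hmul
  nlinarith [h5, hTpos, hS0]


/-- `D_H ≤ Σ_{h ∈ H, h ≠ e} |h^G|^{-1/2}`. -/
theorem stmt_10 {G : Type} [Group G] [Fintype G] {ι : Type} [Fintype ι]
    (ρ : ι → FDRep ℂ G) (hρ : IsCompleteIrrepFamily ρ) (H : Subgroup G) :
    weakDist ρ H ≤
      ∑ h ∈ Finset.univ.filter (fun h : G => h ∈ H ∧ h ≠ 1),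
        (Nat.card (ConjClasses.mk h).carrier : ℝ) ^ (-(1 / 2 : ℝ)) := by
  classical
  obtain ⟨h1, h2, -⟩ := hρ
  set S : Finset G := Finset.univ.filter (fun h : G => h ∈ H ∧ h ≠ 1) with hSdef
  set c : ℝ := (Fintype.card G : ℝ) with hcdef
  have hc : 0 < c := by
    rw [hcdef]; exact_mod_cast Fintype.card_pos
  have hd0 : ∀ i, (0:ℝ) ≤ (Module.finrank ℂ (ρ i) : ℝ) := fun i => Nat.cast_nonneg _
  have hone : (Finset.univ.filter (fun g : G => IsConj 1 g)) = {1} := by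
    ext g
    simp only [Finset.mem_filter, Finset.mem_univ, true_and, Finset.mem_singleton]
    constructor
    · intro hg
      obtain ⟨u, hu⟩ := isConj_iff.mp hg
      rw [mul_one, mul_inv_cancel] at hu
      exact hu.symm
    · rintro rfl; exact IsConj.refl 1
  have B1 : ∑ i : ι, ((Module.finrank ℂ (ρ i) : ℝ))^2 ≤ c := by
    have hb := sum_abs_char_sq_le ρ h1 h2 1
    rw [hone] at hb
    simp only [Finset.card_singleton, Nat.cast_one, div_one] at hb
    calc ∑ i : ι, ((Module.finrank ℂ (ρ i) : ℝ))^2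
        = ∑ i : ι, ‖(ρ i).character 1‖ ^ 2 := by
          refine Finset.sum_congr rfl fun i _ => ?_
          rw [FDRep.char_one, Complex.norm_natCast]
      _ ≤ c := hb
  have hmain : ∀ h ∈ S, c⁻¹ * ∑ i : ι,
      (Module.finrank ℂ (ρ i) : ℝ) * ‖(ρ i).character h‖
      ≤ (Nat.card (ConjClasses.mk h).carrier : ℝ) ^ (-(1/2 : ℝ)) := by
    intro h _
    set T : Finset G := Finset.univ.filter (fun g : G => IsConj h g) with hTdef
    have hTcard : Nat.card (ConjClasses.mk h).carrier = T.card := by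
      have hcarrier : (ConjClasses.mk h).carrier = {g : G | IsConj h g} := by
        ext g
        rw [ConjClasses.mem_carrier_iff_mk_eq, ConjClasses.mk_eq_mk_iff_isConj,
          Set.mem_setOf_eq, isConj_comm]
      rw [hcarrier, Nat.card_coe_set_eq, Set.ncard_eq_toFinset_card', Set.toFinset_setOf]
    have ht1 : 0 < T.card := Finset.card_pos.mpr ⟨h, by
      rw [hTdef, Finset.mem_filter]; exact ⟨Finset.mem_univ h, IsConj.refl h⟩⟩
    have htR : (0:ℝ) < (T.card : ℝ) := by exact_mod_cast ht1
    have B2 := sum_abs_char_sq_le ρ h1 h2 h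
    rw [← hTdef, ← hcdef] at B2
    set A : ℝ := ∑ i : ι, (Module.finrank ℂ (ρ i) : ℝ) * ‖(ρ i).character h‖
      with hAdef
    have hA0 : (0:ℝ) ≤ A :=
      Finset.sum_nonneg fun i _ => mul_nonneg (hd0 i) (norm_nonneg _)
    have habs0 : (0:ℝ) ≤ ∑ i : ι, ‖(ρ i).character h‖ ^ 2 :=
      Finset.sum_nonneg fun i _ => sq_nonneg _
    have hCS : A^2 ≤ (∑ i : ι, ((Module.finrank ℂ (ρ i) : ℝ))^2) *
        (∑ i : ι, ‖(ρ i).character h‖ ^ 2) :=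
      Finset.sum_mul_sq_le_sq_mul_sq Finset.univ _ _
    have hA2 : A^2 ≤ c^2 / (T.card:ℝ) := by
      calc A^2 ≤ (∑ i : ι, ((Module.finrank ℂ (ρ i) : ℝ))^2) *
          (∑ i : ι, ‖(ρ i).character h‖ ^ 2) := hCS
        _ ≤ c * (c / (T.card:ℝ)) := mul_le_mul B1 B2 habs0 hc.le
        _ = c^2 / (T.card:ℝ) := by ring
    have hAle : A ≤ c / Real.sqrt (T.card:ℝ) := by
      have h3 : A ≤ Real.sqrt (c^2 / (T.card:ℝ)) := by
        exact (Real.le_sqrt hA0 (by positivity)).mpr hA2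
      rwa [Real.sqrt_div (sq_nonneg c), Real.sqrt_sq hc.le] at h3
    have hrpow : ((Nat.card (ConjClasses.mk h).carrier : ℝ)) ^ (-(1/2:ℝ))
        = (Real.sqrt (T.card:ℝ))⁻¹ := by
      rw [hTcard, Real.rpow_neg htR.le, ← Real.sqrt_eq_rpow]
    rw [hrpow]
    calc c⁻¹ * A ≤ c⁻¹ * (c / Real.sqrt (T.card:ℝ)) :=
          mul_le_mul_of_nonneg_left hAle (inv_nonneg.mpr hc.le)
      _ = (Real.sqrt (T.card:ℝ))⁻¹ := by
          rw [div_eq_mul_inv, ← mul_assoc, inv_mul_cancel₀ hc.ne', one_mul]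
  calc weakDist ρ H
      = c⁻¹ * ∑ i : ι, (Module.finrank ℂ (ρ i) : ℝ) *
          ‖∑ h ∈ S, (ρ i).character h‖ := rfl
    _ ≤ c⁻¹ * ∑ i : ι, (Module.finrank ℂ (ρ i) : ℝ) *
          ∑ h ∈ S, ‖(ρ i).character h‖ := by
        refine mul_le_mul_of_nonneg_left (Finset.sum_le_sum fun i _ => ?_)
          (inv_nonneg.mpr hc.le)
        exact mul_le_mul_of_nonneg_left (norm_sum_le _ _) (hd0 i)
    _ = ∑ h ∈ S, c⁻¹ * ∑ i : ι, (Module.finrank ℂ (ρ i) : ℝ) *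
          ‖(ρ i).character h‖ := by
        have hswap : ∑ i : ι, (Module.finrank ℂ (ρ i) : ℝ) *
            ∑ h ∈ S, ‖(ρ i).character h‖
            = ∑ h ∈ S, ∑ i : ι, (Module.finrank ℂ (ρ i) : ℝ) *
                ‖(ρ i).character h‖ := by
          simp_rw [Finset.mul_sum]
          exact Finset.sum_comm
        rw [hswap, Finset.mul_sum]
    _ ≤ ∑ h ∈ S, (Nat.card (ConjClasses.mk h).carrier : ℝ) ^ (-(1/2 : ℝ)) :=
        Finset.sum_le_sum hmain
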